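/- Let $d=3$, $\alpha=\frac{3}{2}$ and $g(t,x)=t^{-2/5}|\cos(e_0\cdot x)|$ with $|e_0|=1$. Then $g\notin\mathcal{M}^{1,9/2}_\alpha$, i.e. $\sup_{r>0}\sup_{(t,x)} r^{-7/2}\iint_{\{|t-s|^{2/3}+|x-y|<r\}} g(s,y)\,dy\,ds=+\infty$. More precisely, for each $r>0$, $r^{-7/2}\int_{|s|<r^{3/2}}|s|^{-2/5}ds\cdot\int_{|y|<r}|\cos(e_0\cdot y)|\,dy \ge c\, r^{2/5}$ for $r$ large, so the supremum over $r>0$ diverges. -/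

import Mathlib

open MeasureTheory ENNReal RealInnerProductSpace

noncomputable section

private abbrev E3 : Type := EuclideanSpace ℝ (Fin 3)

private lemma aux_cos_sum (u : ℝ) :
    1 ≤ |Real.cos (u + Real.pi / 4)| + |Real.cos (u + -(Real.pi / 4))| := by
  have h1 : Real.cos (u + Real.pi / 4) ^ 2 + Real.cos (u + -(Real.pi / 4)) ^ 2 = 1 := by
    have hs : Real.sqrt 2 ^ 2 = 2 := Real.sq_sqrt (by norm_num)
    have h := Real.sin_sq_add_cos_sq u
    rw [Real.cos_add, Real.cos_add, Real.cos_neg, Real.sin_neg,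
      Real.cos_pi_div_four, Real.sin_pi_div_four]
    nlinarith [h]
  nlinarith [sq_abs (Real.cos (u + Real.pi / 4)), sq_abs (Real.cos (u + -(Real.pi / 4))),
    abs_nonneg (Real.cos (u + Real.pi / 4)), abs_nonneg (Real.cos (u + -(Real.pi / 4))),
    mul_nonneg (abs_nonneg (Real.cos (u + Real.pi / 4)))
      (abs_nonneg (Real.cos (u + -(Real.pi / 4))))]

private lemma cos_integrable (e0 : E3) (t : ℝ) (c : E3) (s : ℝ) :
    IntegrableOn (fun y : E3 => |Real.cos (⟪e0, y⟫ + t)|) (Metric.ball c s) := by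
  have hcont : Continuous fun y : E3 => |Real.cos (⟪e0, y⟫ + t)| :=
    (Real.continuous_cos.comp ((continuous_const.inner continuous_id).add continuous_const)).abs
  exact (hcont.continuousOn.integrableOn_compact (isCompact_closedBall c s)).mono_set
    Metric.ball_subset_closedBall

private lemma cos_translate (e0 : E3) (he0 : ‖e0‖ = 1) (t ρ : ℝ) :
    (∫ z in Metric.ball (0 : E3) ρ, |Real.cos (⟪e0, z⟫ + t)|) =
      ∫ y in Metric.ball (t • e0) ρ, |Real.cos ⟪e0, y⟫| := by
  have hmp : MeasurePreserving (fun z : E3 => z + t • e0) volume volume :=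
    measurePreserving_add_right volume (t • e0)
  have hemb : MeasurableEmbedding (fun z : E3 => z + t • e0) :=
    (MeasurableEquiv.addRight (t • e0)).measurableEmbedding
  have hpre : (fun z : E3 => z + t • e0) ⁻¹' Metric.ball (t • e0) ρ = Metric.ball (0 : E3) ρ := by
    ext z
    simp [Metric.mem_ball, dist_eq_norm]
  calc (∫ z in Metric.ball (0 : E3) ρ, |Real.cos (⟪e0, z⟫ + t)|)
      = ∫ z in (fun z : E3 => z + t • e0) ⁻¹' Metric.ball (t • e0) ρ,
          |Real.cos ⟪e0, z + t • e0⟫| := by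
        rw [hpre]
        refine setIntegral_congr_fun measurableSet_ball fun z _ => ?_
        rw [inner_add_right, real_inner_smul_right, real_inner_self_eq_norm_sq, he0]
        norm_num
    _ = _ := hmp.setIntegral_preimage_emb hemb (fun y => |Real.cos ⟪e0, y⟫|) (Metric.ball (t • e0) ρ)

private lemma cos_ball_lb (e0 : E3) (he0 : ‖e0‖ = 1) {r : ℝ} (hr : 1 ≤ r) :
    (volume (Metric.ball (0 : E3) 1)).toReal / 250 * r ^ 3 ≤
      ∫ y in Metric.ball (0 : E3) r, |Real.cos ⟪e0, y⟫| := by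
  set V := (volume (Metric.ball (0 : E3) 1)).toReal with hVdef
  have hVpos : 0 < V :=
    ENNReal.toReal_pos (Metric.measure_ball_pos volume _ one_pos).ne' measure_ball_lt_top.ne
  set ρ := r - Real.pi / 4 with hρdef
  have hρ5 : r / 5 ≤ ρ := by rw [hρdef]; nlinarith [Real.pi_lt_d2, hr]
  have hρpos : 0 < ρ := lt_of_lt_of_le (by linarith) hρ5
  have hI0 : IntegrableOn (fun y : E3 => |Real.cos ⟪e0, y⟫|) (Metric.ball (0 : E3) r) := by
    simpa using cos_integrable e0 0 (0 : E3) r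
  have hsub : ∀ t : ℝ, |t| ≤ Real.pi / 4 →
      Metric.ball (t • e0) ρ ⊆ Metric.ball (0 : E3) r := by
    intro t ht
    apply Metric.ball_subset_ball'
    have hd : dist (t • e0) (0 : E3) = |t| := by
      simp [dist_eq_norm, norm_smul, he0]
    rw [hd, hρdef]
    linarith
  have habs : |Real.pi / 4| ≤ Real.pi / 4 := by
    rw [abs_of_nonneg (by positivity)]
  have habs' : |-(Real.pi / 4)| ≤ Real.pi / 4 := by rw [abs_neg]; exact habs
  have hmono : ∀ t : ℝ, |t| ≤ Real.pi / 4 →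
      (∫ z in Metric.ball (0 : E3) ρ, |Real.cos (⟪e0, z⟫ + t)|) ≤
        ∫ y in Metric.ball (0 : E3) r, |Real.cos ⟪e0, y⟫| := by
    intro t ht
    rw [cos_translate e0 he0 t ρ]
    exact setIntegral_mono_set hI0 (ae_of_all _ fun y => abs_nonneg _)
      (HasSubset.Subset.eventuallyLE (hsub t ht))
  have hint1 := cos_integrable e0 (Real.pi / 4) (0 : E3) ρ
  have hint2 := cos_integrable e0 (-(Real.pi / 4)) (0 : E3) ρ
  have hvol : (volume (Metric.ball (0 : E3) ρ)).toReal ≤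
      2 * ∫ y in Metric.ball (0 : E3) r, |Real.cos ⟪e0, y⟫| := by
    calc (volume (Metric.ball (0 : E3) ρ)).toReal
        = ∫ _z in Metric.ball (0 : E3) ρ, (1 : ℝ) := by
          simp only [setIntegral_const, smul_eq_mul, mul_one, measureReal_def]
      _ ≤ ∫ z in Metric.ball (0 : E3) ρ,
            (|Real.cos (⟪e0, z⟫ + Real.pi / 4)| + |Real.cos (⟪e0, z⟫ + -(Real.pi / 4))|) := by
          refine setIntegral_mono_on ((integrableOn_const measure_ball_lt_top.ne))
            (hint1.add hint2) measurableSet_ball fun z _ => aux_cos_sum _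
      _ = (∫ z in Metric.ball (0 : E3) ρ, |Real.cos (⟪e0, z⟫ + Real.pi / 4)|) +
            ∫ z in Metric.ball (0 : E3) ρ, |Real.cos (⟪e0, z⟫ + -(Real.pi / 4))| :=
          integral_add hint1 hint2
      _ ≤ (∫ y in Metric.ball (0 : E3) r, |Real.cos ⟪e0, y⟫|) +
            ∫ y in Metric.ball (0 : E3) r, |Real.cos ⟪e0, y⟫| :=
          add_le_add (hmono _ habs) (hmono _ habs')
      _ = 2 * ∫ y in Metric.ball (0 : E3) r, |Real.cos ⟪e0, y⟫| := by ring
  have hvol3 : (volume (Metric.ball (0 : E3) ρ)).toReal = ρ ^ 3 * V := by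
    rw [Measure.addHaar_ball volume (0 : E3) hρpos.le, finrank_euclideanSpace_fin,
      ENNReal.toReal_mul, ENNReal.toReal_ofReal (by positivity)]
  have hρ3 : (r / 5) ^ 3 ≤ ρ ^ 3 := pow_le_pow_left₀ (by positivity) hρ5 3
  have hmul : (r / 5) ^ 3 * V ≤ ρ ^ 3 * V := mul_le_mul_of_nonneg_right hρ3 hVpos.le
  rw [hvol3] at hvol
  clear_value V ρ
  nlinarith [hmul, hvol]

private lemma rpow_int_integrable {R : ℝ} (hR : 0 < R) :
    IntegrableOn (fun s : ℝ => |s| ^ (-(2/5) : ℝ)) (Set.Ioo (-R) R) := by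
  have h1 : IntervalIntegrable (fun s : ℝ => |s| ^ (-(2/5) : ℝ)) volume 0 R := by
    rw [intervalIntegrable_iff_integrableOn_Ioo_of_le hR.le]
    exact ((intervalIntegral.integrableOn_Ioo_rpow_iff (s := (-(2/5) : ℝ)) hR).2 (by norm_num)).congr_fun
      (fun x hx => by rw [abs_of_pos hx.1]) measurableSet_Ioo
  have h2 : IntervalIntegrable (fun s : ℝ => |s| ^ (-(2/5) : ℝ)) volume (-R) 0 := by
    have h := (IntervalIntegrable.iff_comp_neg).1 h1.symm
    simpa [abs_neg] using h
  have h3 := h2.trans h1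
  rwa [intervalIntegrable_iff_integrableOn_Ioo_of_le (by linarith)] at h3

private lemma rpow_int_lb {R : ℝ} (hR : 0 < R) :
    R ^ ((3/5) : ℝ) ≤ ∫ s in Set.Ioo (-R) R, |s| ^ (-(2/5) : ℝ) := by
  have hmono : (∫ s in Set.Ioo 0 R, |s| ^ (-(2/5) : ℝ)) ≤
      ∫ s in Set.Ioo (-R) R, |s| ^ (-(2/5) : ℝ) :=
    setIntegral_mono_set (rpow_int_integrable hR)
      (ae_of_all _ fun s => Real.rpow_nonneg (abs_nonneg _) _)
      (HasSubset.Subset.eventuallyLE (Set.Ioo_subset_Ioo (by linarith) le_rfl))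
  have heq : (∫ s in Set.Ioo 0 R, |s| ^ (-(2/5) : ℝ)) = 5/3 * R ^ ((3/5) : ℝ) := by
    rw [setIntegral_congr_fun (g := fun s : ℝ => s ^ (-(2/5) : ℝ)) measurableSet_Ioo
      (fun x hx => by rw [abs_of_pos hx.1]),
      ← integral_Ioc_eq_integral_Ioo, ← intervalIntegral.integral_of_le hR.le,
      integral_rpow (Or.inl (by norm_num))]
    have h35 : (-(2/5) : ℝ) + 1 = 3/5 := by norm_num
    rw [h35, Real.zero_rpow (by norm_num)]
    ring
  nlinarith [Real.rpow_nonneg hR.le ((3:ℝ)/5), hmono, heq]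

end

set_option maxHeartbeats 1000000 in
/-- Counterexample: with `d = 3`, `α = 3/2` and `g(t,x) = |t|^{-2/5}|cos(e₀·x)|`
(`|e₀| = 1`), the parabolic Morrey `𝓜^{1,9/2}_α` norm of `g` is infinite;
more precisely the basic lower bound
`r^{-7/2} ∫_{|s|<r^{3/2}} |s|^{-2/5} ds · ∫_{|y|<r} |cos(e₀·y)| dy ≥ c r^{2/5}`
holds for `r ≥ 1`, so the supremum over `r > 0` diverges. -/
theorem stmt_16 (e0 : EuclideanSpace ℝ (Fin 3)) (he0 : ‖e0‖ = 1) :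
    (⨆ r > (0:ℝ), ⨆ t ≥ (0:ℝ), ⨆ x : EuclideanSpace ℝ (Fin 3),
        ENNReal.ofReal (r ^ (-(7/2) : ℝ)) *
          ∫⁻ q in {q : ℝ × EuclideanSpace ℝ (Fin 3) |
              |t - q.1| ^ ((2/3) : ℝ) + ‖x - q.2‖ < r},
            ENNReal.ofReal (|q.1| ^ (-(2/5) : ℝ) * |Real.cos ⟪e0, q.2⟫|)) = ⊤ ∧
    ∃ c > (0:ℝ), ∀ r ≥ (1:ℝ),
      c * r ^ ((2/5) : ℝ) ≤
        r ^ (-(7/2) : ℝ) *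
          (∫ s in Set.Ioo (-(r ^ ((3/2) : ℝ))) (r ^ ((3/2) : ℝ)), |s| ^ (-(2/5) : ℝ)) *
          ∫ y in Metric.ball (0 : EuclideanSpace ℝ (Fin 3)) r, |Real.cos ⟪e0, y⟫| := by
  have hVpos : 0 < (volume (Metric.ball (0 : E3) 1)).toReal :=
    ENNReal.toReal_pos (Metric.measure_ball_pos volume _ one_pos).ne' measure_ball_lt_top.ne
  set V := (volume (Metric.ball (0 : E3) 1)).toReal with hVdef
  constructor
  · -- the supremum is infinite
    rw [eq_top_iff, ← ENNReal.iSup_natCast]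
    refine iSup_le fun n => ?_
    set M : ℝ := max 2 (4000 * n / V) with hMdef
    have hM2 : (2:ℝ) ≤ M := le_max_left _ _
    have hMpos : (0:ℝ) < M := lt_of_lt_of_le two_pos hM2
    set r : ℝ := M ^ ((5/2) : ℝ) with hrdef
    have hr2 : (2:ℝ) ≤ r := by
      calc (2:ℝ) = 2 ^ ((1:ℝ)) := (Real.rpow_one 2).symm
        _ ≤ 2 ^ ((5/2) : ℝ) := Real.rpow_le_rpow_of_exponent_le one_le_two (by norm_num)
        _ ≤ M ^ ((5/2) : ℝ) := Real.rpow_le_rpow (by norm_num) hM2 (by norm_num)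
    have hr0 : (0:ℝ) < r := lt_of_lt_of_le two_pos hr2
    have hr25 : r ^ ((2/5) : ℝ) = M := by
      rw [hrdef, ← Real.rpow_mul hMpos.le]
      norm_num
    have hr1 : (1:ℝ) ≤ r / 2 := by linarith
    have hrh0 : (0:ℝ) < r / 2 := by linarith
    set R' : ℝ := (r / 2) ^ ((3/2) : ℝ) with hR'def
    have hR'pos : 0 < R' := Real.rpow_pos_of_pos hrh0 _
    -- the product region is inside the parabolic region
    have hsub : Set.Ioo (-R') R' ×ˢ Metric.ball (0 : E3) (r / 2) ⊆
        {q : ℝ × E3 | |(0:ℝ) - q.1| ^ ((2/3) : ℝ) + ‖(0:E3) - q.2‖ < r} := by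
      rintro ⟨s, y⟩ ⟨hs, hy⟩
      have h1 : |s| < R' := abs_lt.2 ⟨(Set.mem_Ioo.1 hs).1, (Set.mem_Ioo.1 hs).2⟩
      have h2 : |s| ^ ((2/3) : ℝ) < r / 2 := by
        have h := Real.rpow_lt_rpow (abs_nonneg s) h1 (by norm_num : (0:ℝ) < 2/3)
        rwa [hR'def, ← Real.rpow_mul hrh0.le,
          show (3/2 : ℝ) * (2/3) = 1 by norm_num, Real.rpow_one] at h
      have h3 : ‖y‖ < r / 2 := by simpa using hy
      show |(0:ℝ) - s| ^ ((2/3) : ℝ) + ‖(0:E3) - y‖ < r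
      rw [zero_sub, abs_neg, zero_sub, norm_neg]
      linarith
    have hfmeas : Measurable fun s : ℝ => ENNReal.ofReal (|s| ^ (-(2/5) : ℝ)) := by
      measurability
    have hgmeas : Measurable fun y : E3 => ENNReal.ofReal |Real.cos ⟪e0, y⟫| := by
      exact ((Real.continuous_cos.comp
        (continuous_const.inner continuous_id)).abs).measurable.ennreal_ofReal
    have hprod : (∫⁻ s in Set.Ioo (-R') R', ENNReal.ofReal (|s| ^ (-(2/5) : ℝ))) *
          (∫⁻ y in Metric.ball (0 : E3) (r / 2), ENNReal.ofReal |Real.cos ⟪e0, y⟫|) =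
        ∫⁻ q in Set.Ioo (-R') R' ×ˢ Metric.ball (0 : E3) (r / 2),
          ENNReal.ofReal (|q.1| ^ (-(2/5) : ℝ) * |Real.cos ⟪e0, q.2⟫|) := by
      calc _ = ∫⁻ q, ENNReal.ofReal (|q.1| ^ (-(2/5) : ℝ)) * ENNReal.ofReal |Real.cos ⟪e0, q.2⟫|
            ∂((volume.restrict (Set.Ioo (-R') R')).prod
              (volume.restrict (Metric.ball (0 : E3) (r / 2)))) :=
          (lintegral_prod_mul hfmeas.aemeasurable hgmeas.aemeasurable).symm
        _ = ∫⁻ q in Set.Ioo (-R') R' ×ˢ Metric.ball (0 : E3) (r / 2),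
              ENNReal.ofReal (|q.1| ^ (-(2/5) : ℝ)) * ENNReal.ofReal |Real.cos ⟪e0, q.2⟫| := by
            rw [Measure.prod_restrict, ← Measure.volume_eq_prod]
        _ = _ := lintegral_congr fun q =>
            (ENNReal.ofReal_mul (Real.rpow_nonneg (abs_nonneg _) _)).symm
    have hSlb : ENNReal.ofReal ((r / 2) ^ ((9/10) : ℝ)) ≤
        ∫⁻ s in Set.Ioo (-R') R', ENNReal.ofReal (|s| ^ (-(2/5) : ℝ)) := by
      rw [← ofReal_integral_eq_lintegral_ofReal (rpow_int_integrable hR'pos)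
        (ae_of_all _ fun s => Real.rpow_nonneg (abs_nonneg _) _)]
      apply ENNReal.ofReal_le_ofReal
      have h := rpow_int_lb hR'pos
      rwa [hR'def, ← Real.rpow_mul hrh0.le, show (3/2 : ℝ) * (3/5) = 9/10 by norm_num] at h
    have hIB : IntegrableOn (fun y : E3 => |Real.cos ⟪e0, y⟫|) (Metric.ball (0 : E3) (r / 2)) := by
      simpa using cos_integrable e0 0 (0 : E3) (r / 2)
    have hBlb : ENNReal.ofReal (V / 250 * (r / 2) ^ 3) ≤
        ∫⁻ y in Metric.ball (0 : E3) (r / 2), ENNReal.ofReal |Real.cos ⟪e0, y⟫| := by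
      rw [← ofReal_integral_eq_lintegral_ofReal hIB (ae_of_all _ fun y => abs_nonneg _)]
      exact ENNReal.ofReal_le_ofReal (cos_ball_lb e0 he0 hr1)
    -- real-number comparison of the constants
    have hexp : r ^ (-(7/2) : ℝ) * (r ^ ((9/10) : ℝ) * r ^ (3:ℕ)) = r ^ ((2/5) : ℝ) := by
      rw [← Real.rpow_natCast r 3, ← Real.rpow_add hr0, ← Real.rpow_add hr0]
      norm_num
    have e1 : (r / 2) ^ ((9/10) : ℝ) = r ^ ((9/10) : ℝ) / 2 ^ ((9/10) : ℝ) :=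
      Real.div_rpow hr0.le (by norm_num : (0:ℝ) ≤ 2) ((9:ℝ)/10)
    have e2 : (2:ℝ) ^ ((9/10) : ℝ) ≤ 2 := by
      calc (2:ℝ) ^ ((9/10) : ℝ) ≤ 2 ^ ((1:ℝ)) :=
            Real.rpow_le_rpow_of_exponent_le one_le_two (by norm_num)
        _ = 2 := Real.rpow_one 2
    have e3 : r ^ ((9/10) : ℝ) / 2 ≤ (r / 2) ^ ((9/10) : ℝ) := by
      rw [e1]
      exact div_le_div_of_nonneg_left (Real.rpow_nonneg hr0.le _)
        (Real.rpow_pos_of_pos two_pos _) e2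
    have hCnn : (0:ℝ) ≤ V / 250 * (r ^ 3 / 8) :=
      mul_nonneg (div_nonneg hVpos.le (by norm_num)) (by positivity)
    have hreal : V / 4000 * r ^ ((2/5) : ℝ) ≤
        r ^ (-(7/2) : ℝ) * ((r / 2) ^ ((9/10) : ℝ) * (V / 250 * (r / 2) ^ 3)) := by
      calc V / 4000 * r ^ ((2/5) : ℝ)
          = r ^ (-(7/2) : ℝ) * (r ^ ((9/10) : ℝ) / 2 * (V / 250 * (r ^ 3 / 8))) := by
            rw [← hexp]; ring
        _ ≤ r ^ (-(7/2) : ℝ) * ((r / 2) ^ ((9/10) : ℝ) * (V / 250 * (r ^ 3 / 8))) :=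
            mul_le_mul_of_nonneg_left (mul_le_mul_of_nonneg_right e3 hCnn)
              (Real.rpow_nonneg hr0.le _)
        _ = r ^ (-(7/2) : ℝ) * ((r / 2) ^ ((9/10) : ℝ) * (V / 250 * (r / 2) ^ 3)) := by
            ring
    -- the key lower bound for the Morrey quantity at this `r`, `t = 0`, `x = 0`
    have key : ENNReal.ofReal (V / 4000 * r ^ ((2/5) : ℝ)) ≤
        ENNReal.ofReal (r ^ (-(7/2) : ℝ)) *
          ∫⁻ q in {q : ℝ × E3 | |(0:ℝ) - q.1| ^ ((2/3) : ℝ) + ‖(0:E3) - q.2‖ < r},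
            ENNReal.ofReal (|q.1| ^ (-(2/5) : ℝ) * |Real.cos ⟪e0, q.2⟫|) := by
      calc ENNReal.ofReal (V / 4000 * r ^ ((2/5) : ℝ))
          ≤ ENNReal.ofReal (r ^ (-(7/2) : ℝ) *
              ((r / 2) ^ ((9/10) : ℝ) * (V / 250 * (r / 2) ^ 3))) :=
            ENNReal.ofReal_le_ofReal hreal
        _ = ENNReal.ofReal (r ^ (-(7/2) : ℝ)) *
              (ENNReal.ofReal ((r / 2) ^ ((9/10) : ℝ)) *
                ENNReal.ofReal (V / 250 * (r / 2) ^ 3)) := by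
            rw [ENNReal.ofReal_mul (Real.rpow_nonneg hr0.le _),
              ENNReal.ofReal_mul (Real.rpow_nonneg hrh0.le _)]
        _ ≤ ENNReal.ofReal (r ^ (-(7/2) : ℝ)) *
              ((∫⁻ s in Set.Ioo (-R') R', ENNReal.ofReal (|s| ^ (-(2/5) : ℝ))) *
                ∫⁻ y in Metric.ball (0 : E3) (r / 2), ENNReal.ofReal |Real.cos ⟪e0, y⟫|) :=
            mul_le_mul' le_rfl (mul_le_mul' hSlb hBlb)
        _ = ENNReal.ofReal (r ^ (-(7/2) : ℝ)) *
              ∫⁻ q in Set.Ioo (-R') R' ×ˢ Metric.ball (0 : E3) (r / 2),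
                ENNReal.ofReal (|q.1| ^ (-(2/5) : ℝ) * |Real.cos ⟪e0, q.2⟫|) := by
            rw [hprod]
        _ ≤ _ := mul_le_mul' le_rfl (lintegral_mono_set hsub)
    have goal1 : (n : ℝ≥0∞) ≤ ENNReal.ofReal (V / 4000 * r ^ ((2/5) : ℝ)) := by
      rw [← ENNReal.ofReal_natCast n]
      apply ENNReal.ofReal_le_ofReal
      rw [hr25]
      calc (n:ℝ) = V / 4000 * (4000 * n / V) := by
            field_simp
        _ ≤ V / 4000 * M :=
            mul_le_mul_of_nonneg_left (le_max_right _ _)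
              (div_nonneg hVpos.le (by norm_num))
    refine le_trans goal1 (le_trans key ?_)
    refine le_iSup₂_of_le r hr0 (le_iSup₂_of_le (0:ℝ) le_rfl ?_)
    exact le_iSup (fun x : EuclideanSpace ℝ (Fin 3) =>
      ENNReal.ofReal (r ^ (-(7/2) : ℝ)) *
        ∫⁻ q in {q : ℝ × EuclideanSpace ℝ (Fin 3) |
            |(0:ℝ) - q.1| ^ ((2/3) : ℝ) + ‖x - q.2‖ < r},
          ENNReal.ofReal (|q.1| ^ (-(2/5) : ℝ) * |Real.cos ⟪e0, q.2⟫|))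
      (0 : EuclideanSpace ℝ (Fin 3))
  · -- the explicit lower bound
    refine ⟨V / 250, by positivity, fun r hr => ?_⟩
    have hr0 : (0:ℝ) < r := lt_of_lt_of_le one_pos hr
    have hA : r ^ ((9/10) : ℝ) ≤
        ∫ s in Set.Ioo (-(r ^ ((3/2) : ℝ))) (r ^ ((3/2) : ℝ)), |s| ^ (-(2/5) : ℝ) := by
      have h := rpow_int_lb (R := r ^ ((3/2) : ℝ)) (Real.rpow_pos_of_pos hr0 _)
      rwa [← Real.rpow_mul hr0.le, show (3/2 : ℝ) * (3/5) = 9/10 by norm_num] at h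
    have hI := cos_ball_lb e0 he0 hr
    have hAnn : (0:ℝ) ≤
        ∫ s in Set.Ioo (-(r ^ ((3/2) : ℝ))) (r ^ ((3/2) : ℝ)), |s| ^ (-(2/5) : ℝ) :=
      le_trans (Real.rpow_nonneg hr0.le _) hA
    have hexp : r ^ (-(7/2) : ℝ) * r ^ ((9/10) : ℝ) * r ^ (3:ℕ) = r ^ ((2/5) : ℝ) := by
      rw [← Real.rpow_natCast r 3, ← Real.rpow_add hr0, ← Real.rpow_add hr0]
      norm_num
    have h7 : (0:ℝ) ≤ r ^ (-(7/2) : ℝ) := Real.rpow_nonneg hr0.le _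
    calc V / 250 * r ^ ((2/5) : ℝ)
        = r ^ (-(7/2) : ℝ) * r ^ ((9/10) : ℝ) * (V / 250 * r ^ (3:ℕ)) := by
          rw [← hexp]; ring
      _ ≤ (r ^ (-(7/2) : ℝ) *
            ∫ s in Set.Ioo (-(r ^ ((3/2) : ℝ))) (r ^ ((3/2) : ℝ)), |s| ^ (-(2/5) : ℝ)) *
            ∫ y in Metric.ball (0 : EuclideanSpace ℝ (Fin 3)) r, |Real.cos ⟪e0, y⟫| := by
          apply mul_le_mul (mul_le_mul_of_nonneg_left hA h7) hI
          · exact mul_nonneg (div_nonneg hVpos.le (by norm_num)) (by positivity)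
          · exact mul_nonneg h7 hAnn
      _ = _ := by ring
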